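/- Fix L_C > 0, k > 0, 0 < α < 1/2, K ≥ 0 and S ≥ 0. Let κ : Γ_ℂ × ℝ → ℂ satisfy, for all x ∈ Γ_ℂ and t ∈ ℝ: |κ(x,t)| ≤ K e^{−k|Im x|}(1+|x|+|t|)^{−3/2} when |t| > L_C, and |κ(x,t)| ≤ K (1 + |log|x−t||) e^{−k|Im x|}(1+|x|)^{−3/2} when |t| ≤ L_C and t ≠ x. Let σ : ℝ → ℂ be measurable with |σ(t)| ≤ S(1+|t|)^{−α} for all t ∈ ℝ. Then there is a constant K′ > 0, depending only on k, α, L_C and K, such that for every x ∈ Γ_ℂ the integral ∫_ℝ κ(x,t) σ(t) dt is absolutely convergent and |∫_ℝ κ(x,t) σ(t) dt| ≤ K′ S e^{−k|Im x|}(1+|x|)^{−(α+1/2)}. -/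

import Mathlib

open MeasureTheory Set

noncomputable section

noncomputable section

/-- The region `Γ_L = {z : Re z < -L, Im z ≤ 0}`. -/
def GammaL (L : ℝ) : Set ℂ := {z | z.re < -L ∧ z.im ≤ 0}

/-- The region `Γ_M = {z : |Re z| ≤ L, Im z = 0}`. -/
def GammaM (L : ℝ) : Set ℂ := {z | |z.re| ≤ L ∧ z.im = 0}

/-- The region `Γ_R = {z : Re z > L, Im z ≥ 0}`. -/
def GammaR (L : ℝ) : Set ℂ := {z | L < z.re ∧ 0 ≤ z.im}

/-- The contour region `Γ_ℂ = Γ_L ∪ Γ_M ∪ Γ_R`. -/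
def GammaC (L : ℝ) : Set ℂ := GammaL L ∪ GammaM L ∪ GammaR L

/-- The weight `e^{β|Im x|} (1+|x|)^α`. -/
def cweight (α β : ℝ) (x : ℂ) : ℝ :=
  Real.exp (β * |x.im|) * (1 + ‖x‖) ^ α

/-- The norm `‖f‖_{α,β} = sup_{x ∈ Γ_ℂ} e^{β|Im x|}(1+|x|)^α |f x|`. -/
def cnorm (L α β : ℝ) (f : ℂ → ℂ) : ℝ :=
  sSup ((fun x => cweight α β x * ‖f x‖) '' GammaC L)

/-- Membership in the space `𝒞^{α,β}`: continuous on `Γ_ℂ`, analytic on the interiors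
of `Γ_L` and `Γ_R`, and with finite norm `‖f‖_{α,β}` (the weighted values are bounded). -/
def MemC (L α β : ℝ) (f : ℂ → ℂ) : Prop :=
  ContinuousOn f (GammaC L) ∧
  AnalyticOnNhd ℂ f (interior (GammaL L)) ∧
  AnalyticOnNhd ℂ f (interior (GammaR L)) ∧
  BddAbove ((fun x => cweight α β x * ‖f x‖) '' GammaC L)

lemma neg_rpow_neg_half {s : ℝ} (h : s < 0) : s ^ (-(1/2) : ℝ) = 0 := by
  rw [Real.rpow_def_of_neg h]
  have h2 : (-(1/2) : ℝ) * Real.pi = -(Real.pi/2) := by ring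
  rw [h2, Real.cos_neg, Real.cos_pi_div_two, mul_zero]

lemma rpow_neg_half_nonneg (s : ℝ) : 0 ≤ s ^ (-(1/2) : ℝ) := by
  rcases lt_or_ge s 0 with h | h
  · rw [neg_rpow_neg_half h]
  · exact Real.rpow_nonneg h _

lemma abs_rpow_neg_half (s : ℝ) :
    |s| ^ (-(1/2) : ℝ) = s ^ (-(1/2) : ℝ) + (-s) ^ (-(1/2) : ℝ) := by
  rcases lt_trichotomy s 0 with h | h | h
  · rw [abs_of_neg h, neg_rpow_neg_half h]; ring
  · subst h; simp [Real.zero_rpow (by norm_num : (-(1/2):ℝ) ≠ 0)]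
  · rw [abs_of_pos h, neg_rpow_neg_half (by linarith : -s < 0)]; ring

lemma log_le_two_mul_sqrt {B : ℝ} (hB : 1 ≤ B) : Real.log B ≤ 2 * Real.sqrt B := by
  have h0 : (0:ℝ) ≤ B := by linarith
  have h1 := Real.log_sqrt h0
  have h2 : Real.log (Real.sqrt B) ≤ Real.sqrt B - 1 :=
    Real.log_le_sub_one_of_pos (Real.sqrt_pos.mpr (by linarith))
  nlinarith [Real.sqrt_nonneg B]

lemma neg_log_le {u : ℝ} (hu : 0 < u) : -Real.log u ≤ 2 * u ^ (-(1/2) : ℝ) := by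
  have h2 : Real.log (u ^ (-(1/2):ℝ)) = (-(1/2)) * Real.log u := Real.log_rpow hu _
  have h3 : Real.log (u ^ (-(1/2):ℝ)) ≤ u ^ (-(1/2):ℝ) - 1 :=
    Real.log_le_sub_one_of_pos (Real.rpow_pos_of_pos hu _)
  have h4 := rpow_neg_half_nonneg u
  linarith

lemma abs_log_le {u B : ℝ} (hu : 0 < u) (huB : u ≤ B) (hB : 1 ≤ B) :
    |Real.log u| ≤ 2 * u ^ (-(1/2):ℝ) + Real.log B := by
  rcases abs_cases (Real.log u) with ⟨h1, _⟩ | ⟨h1, _⟩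
  · rw [h1]
    have := Real.log_le_log hu huB
    have := rpow_neg_half_nonneg u
    linarith
  · rw [h1]
    have := neg_log_le hu
    have := Real.log_nonneg hB
    linarith

lemma abs_log_le' {u r B : ℝ} (hu : 0 < u) (hur : u ≤ r) (hrB : r ≤ B) (hB : 1 ≤ B) :
    |Real.log r| ≤ |Real.log u| + Real.log B := by
  have hr : 0 < r := lt_of_lt_of_le hu hur
  rcases abs_cases (Real.log r) with ⟨h1, _⟩ | ⟨h1, _⟩
  · rw [h1]
    have := Real.log_le_log hr hrB
    have := abs_nonneg (Real.log u)
    linarith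
  · rw [h1]
    have h2 := Real.log_le_log hu hur
    have h3 := neg_abs_le (Real.log u)
    have := Real.log_nonneg hB
    linarith

lemma one_add_abs_log_le {u r B : ℝ} (hu : 0 < u) (hur : u ≤ r) (hrB : r ≤ B) (hB : 1 ≤ B) :
    1 + |Real.log r| ≤ (1 + 4 * Real.sqrt B) + 2 * (u ^ (-(1/2):ℝ)) := by
  have hA := abs_log_le' hu hur hrB hB
  have hBb := abs_log_le hu (le_trans hur hrB) hB
  have hlB := log_le_two_mul_sqrt hB
  linarith

lemma integrable_comp_abs' {f : ℝ → ℝ} (hf : IntegrableOn f (Ioi 0)) :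
    Integrable (fun x => f |x|) := by
  have hIoi : IntegrableOn (fun x => f |x|) (Ioi 0) := by
    apply hf.congr_fun (fun x hx => ?_) measurableSet_Ioi
    rw [abs_eq_self.mpr (le_of_lt hx)]
  have hIic : IntegrableOn (fun x ↦ f |x|) (Iic 0) := by
    rw [← Measure.map_neg_eq_self (volume : Measure ℝ)]
    have m : MeasurableEmbedding fun x : ℝ => -x := (Homeomorph.neg ℝ).measurableEmbedding
    rw [m.integrableOn_map_iff]
    simp_rw [Function.comp_def, abs_neg, neg_preimage, neg_Iic, neg_zero]
    exact (integrableOn_Ici_iff_integrableOn_Ioi (by finiteness)).mpr hIoi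
  have := hIic.union hIoi
  rwa [Iic_union_Ioi, integrableOn_univ] at this


set_option maxHeartbeats 8000000 in
/-- Weighted bound for the operator with kernel decaying like
`(1+|x|+|t|)^{-3/2}` off the channel and with a logarithmic singularity inside it:
there is `K' > 0` depending only on `k, α, L, K` such that for any admissible kernel and
any measurable density `σ` with `|σ(t)| ≤ S (1+|t|)^{-α}`, the integral converges
absolutely and is bounded by `K' S e^{-k|Im x|}(1+|x|)^{-(α+1/2)}`. -/
theorem statement_5 (L k α K : ℝ) (hL : 0 < L) (hk : 0 < k)
    (hα0 : 0 < α) (hα : α < 1/2) (hK : 0 ≤ K) :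
    ∃ K' > 0, ∀ (κ : ℂ → ℝ → ℂ) (σ : ℝ → ℂ) (S : ℝ),
      (∀ x : ℂ, Measurable (κ x)) →
      (∀ x ∈ GammaC L, ∀ t : ℝ, L < |t| →
        ‖κ x t‖ ≤
          K * Real.exp (-k * |x.im|) * (1 + ‖x‖ + |t|) ^ (-(3/2 : ℝ))) →
      (∀ x ∈ GammaC L, ∀ t : ℝ, |t| ≤ L → (t : ℂ) ≠ x →
        ‖κ x t‖ ≤ K * (1 + |Real.log (‖x - t‖)|) *
          Real.exp (-k * |x.im|) * (1 + ‖x‖) ^ (-(3/2 : ℝ))) →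
      Measurable σ →
      (∀ t : ℝ, ‖σ t‖ ≤ S * (1 + |t|) ^ (-α)) →
      ∀ x ∈ GammaC L,
        Integrable (fun t => κ x t * σ t) volume ∧
        ‖∫ t, κ x t * σ t‖ ≤
          K' * S * Real.exp (-k * |x.im|) * (1 + ‖x‖) ^ (-(α + 1/2)) := by
  have hα1 : 0 < 1 - α := by linarith
  set C₁ : ℝ := (10*L+8) * Real.sqrt (1+L) with hC₁def
  set C₂ : ℝ := 4/(1-α) + 4 with hC₂def
  have hC₁ : 0 ≤ C₁ := by positivity
  have hC₂ : 0 ≤ C₂ := by positivity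
  refine ⟨K * (C₁ + C₂) + 1, by nlinarith, ?_⟩
  intro κ σ S hκm hout hin hσm hσb x hx
  have houtx := hout x hx
  have hinx := hin x hx
  clear hout hin
  set c : ℝ := x.re with hcdef
  set X : ℝ := ‖x‖ with hXdef
  set E : ℝ := Real.exp (-k * |x.im|) with hEdef
  have hE : 0 < E := Real.exp_pos _
  have hX0 : 0 ≤ X := norm_nonneg x
  have h1X : (1:ℝ) ≤ 1 + X := by linarith
  have h1X0 : (0:ℝ) < 1 + X := by linarith
  have hB1 : (1:ℝ) ≤ 1 + X + L := by linarith
  have hcX : |c| ≤ X := Complex.abs_re_le_norm x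
  have hS : 0 ≤ S := by
    have h := hσb 0
    simp at h
    exact le_trans (norm_nonneg _) h
  have hLL : (-L) ≤ L := by linarith
  set A : ℝ := K*S*E*(1+X)^(-(3/2):ℝ) with hAdef
  have hA : 0 ≤ A := by positivity
  set fin : ℝ → ℝ := fun t =>
    A * ((1 + 4*Real.sqrt (1+X+L)) + 2*((c-t)^(-(1/2):ℝ) + (t-c)^(-(1/2):ℝ))) with hfindef
  set gin : ℝ → ℝ := (Icc (-L) L).indicator fin with hgindef
  set f₀ : ℝ → ℝ := fun t => (1+X+t)^(-(3/2):ℝ) * (1+t)^(-α) with hf₀def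
  set gout : ℝ → ℝ := fun t => K*S*E * f₀ |t| with hgoutdef
  set P : ℝ := (1+X)^(-(α+1/2):ℝ) with hPdef
  have hP0 : 0 ≤ P := Real.rpow_nonneg (by linarith) _
  -- interval integrability of the singular pieces
  have hII1 : IntervalIntegrable (fun t => (c-t)^(-(1/2):ℝ)) volume (-L) L := by
    have h := (intervalIntegral.intervalIntegrable_rpow'
      (by norm_num : (-1:ℝ) < -(1/2)) (a := c-L) (b := c+L)).comp_sub_left c
    have e1 : c - (c - L) = L := by ring
    have e2 : c - (c + L) = -L := by ring
    rw [e1, e2] at h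
    exact h.symm
  have hII2 : IntervalIntegrable (fun t => (t-c)^(-(1/2):ℝ)) volume (-L) L := by
    have h := (intervalIntegral.intervalIntegrable_rpow'
      (by norm_num : (-1:ℝ) < -(1/2)) (a := -L-c) (b := L-c)).comp_sub_right c
    have e1 : -L - c + c = -L := by ring
    have e2 : L - c + c = L := by ring
    rw [e1, e2] at h
    exact h
  have hIIconst : IntervalIntegrable (fun _ : ℝ => (1 + 4*Real.sqrt (1+X+L))) volume (-L) L :=
    intervalIntegrable_const
  have hIIfin : IntervalIntegrable fin volume (-L) L :=
    (hIIconst.add ((hII1.add hII2).const_mul 2)).const_mul A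
  have hfinIcc : IntegrableOn fin (Icc (-L) L) :=
    (integrableOn_Icc_iff_integrableOn_Ioc (by finiteness)).mpr
      ((intervalIntegrable_iff_integrableOn_Ioc_of_le hLL).mp hIIfin)
  have hgin : Integrable gin := (integrable_indicator_iff measurableSet_Icc).mpr hfinIcc
  -- integrability of f₀
  have hf₀m : Measurable f₀ := by
    apply Measurable.mul
    · exact (measurable_const.add measurable_id).pow_const _
    · exact (measurable_const.add measurable_id).pow_const _
  have hf0Ioc : IntegrableOn f₀ (Ioc 0 (1+X)) := by
    refine (intervalIntegrable_iff_integrableOn_Ioc_of_le (by linarith)).mp ?_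
    apply ContinuousOn.intervalIntegrable
    apply ContinuousOn.mul
    · apply ContinuousOn.rpow_const (by fun_prop)
      intro t ht
      rw [uIcc_of_le (by linarith : (0:ℝ) ≤ 1+X)] at ht
      exact Or.inl (by nlinarith [ht.1])
    · apply ContinuousOn.rpow_const (by fun_prop)
      intro t ht
      rw [uIcc_of_le (by linarith : (0:ℝ) ≤ 1+X)] at ht
      exact Or.inl (by nlinarith [ht.1])
  have hpow : IntegrableOn (fun t => t ^ (-(3/2)-α : ℝ)) (Ioi (1+X)) :=
    integrableOn_Ioi_rpow_of_lt (by linarith) (by linarith)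
  have hptwise : ∀ t ∈ Ioi (1+X), f₀ t ≤ t ^ (-(3/2)-α : ℝ) := by
    intro t ht
    have ht0 : 0 < t := lt_trans h1X0 ht
    have e1 : (1+X+t)^(-(3/2):ℝ) ≤ t^(-(3/2):ℝ) :=
      Real.rpow_le_rpow_of_nonpos ht0 (by linarith) (by norm_num)
    have e2 : (1+t)^(-α) ≤ t^(-α) :=
      Real.rpow_le_rpow_of_nonpos ht0 (by linarith) (by linarith)
    calc f₀ t ≤ t^(-(3/2):ℝ) * t^(-α) := by
          exact mul_le_mul e1 e2 (Real.rpow_nonneg (by linarith) _)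
            (Real.rpow_nonneg ht0.le _)
      _ = t ^ (-(3/2)-α : ℝ) := by
          rw [← Real.rpow_add ht0]
          congr 1
  have hf0Ioi : IntegrableOn f₀ (Ioi (1+X)) := by
    refine Integrable.mono' hpow (hf₀m.aestronglyMeasurable.restrict) ?_
    refine (ae_restrict_iff' measurableSet_Ioi).mpr (ae_of_all _ fun t ht => ?_)
    have ht0 : (0:ℝ) < t := lt_trans h1X0 ht
    rw [Real.norm_of_nonneg (mul_nonneg (Real.rpow_nonneg (by linarith) _)
      (Real.rpow_nonneg (by linarith) _))]
    exact hptwise t ht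
  have hf0 : IntegrableOn f₀ (Ioi 0) := by
    rw [← Ioc_union_Ioi_eq_Ioi (by linarith : (0:ℝ) ≤ 1+X)]
    exact hf0Ioc.union hf0Ioi
  have hgout : Integrable gout :=
    ((integrable_comp_abs' hf0).const_mul (K*S*E))
  -- value bound for gin integral
  have hsqB : (1:ℝ) ≤ Real.sqrt (1+X+L) := by
    nlinarith [Real.sq_sqrt (by linarith : (0:ℝ) ≤ 1+X+L), Real.sqrt_nonneg (1+X+L)]
  have hI1 : ∫ t in (-L)..L, (c-t)^(-(1/2):ℝ) ≤ 2 * Real.sqrt (1+X+L) := by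
    rw [intervalIntegral.integral_comp_sub_left (fun s => s ^ (-(1/2):ℝ)) c]
    have e2 : c - (-L) = c + L := by ring
    rw [e2, integral_rpow (Or.inl (by norm_num))]
    have he : ((-(1/2):ℝ)+1) = (1/2:ℝ) := by norm_num
    rw [he]
    have e3 : (c+L) ^ ((1:ℝ)/2) ≤ Real.sqrt (1+X+L) := by
      rw [← Real.sqrt_eq_rpow]
      exact Real.sqrt_le_sqrt (by nlinarith [le_abs_self c])
    have e4 : 0 ≤ (c-L) ^ ((1:ℝ)/2) := by
      rw [← Real.sqrt_eq_rpow]; exact Real.sqrt_nonneg _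
    rw [div_le_iff₀ (by norm_num : (0:ℝ) < 1/2)]
    nlinarith [Real.sqrt_nonneg (1+X+L)]
  have hI2 : ∫ t in (-L)..L, (t-c)^(-(1/2):ℝ) ≤ 2 * Real.sqrt (1+X+L) := by
    rw [intervalIntegral.integral_comp_sub_right (fun s => s ^ (-(1/2):ℝ)) c]
    rw [integral_rpow (Or.inl (by norm_num))]
    have he : ((-(1/2):ℝ)+1) = (1/2:ℝ) := by norm_num
    rw [he]
    have e3 : (L-c) ^ ((1:ℝ)/2) ≤ Real.sqrt (1+X+L) := by
      rw [← Real.sqrt_eq_rpow]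
      exact Real.sqrt_le_sqrt (by nlinarith [neg_abs_le c])
    have e4 : 0 ≤ (-L-c) ^ ((1:ℝ)/2) := by
      rw [← Real.sqrt_eq_rpow]; exact Real.sqrt_nonneg _
    rw [div_le_iff₀ (by norm_num : (0:ℝ) < 1/2)]
    nlinarith [Real.sqrt_nonneg (1+X+L)]
  have hsplit : ∫ t in (-L)..L, fin t
      = A * ((2*L)*(1 + 4*Real.sqrt (1+X+L))
        + 2*((∫ t in (-L)..L, (c-t)^(-(1/2):ℝ)) + (∫ t in (-L)..L, (t-c)^(-(1/2):ℝ)))) := by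
    rw [hfindef]
    rw [intervalIntegral.integral_const_mul,
      intervalIntegral.integral_add hIIconst ((hII1.add hII2).const_mul 2),
      intervalIntegral.integral_const, intervalIntegral.integral_const_mul,
      intervalIntegral.integral_add hII1 hII2, smul_eq_mul]
    ring
  have hsqfac : Real.sqrt (1+X+L) ≤ Real.sqrt (1+L) * Real.sqrt (1+X) := by
    rw [← Real.sqrt_mul (by linarith)]
    exact Real.sqrt_le_sqrt (by nlinarith)
  have hIgin : ∫ t, gin t ≤ K*S*E*C₁*P := by
    have h0 : ∫ t, gin t = ∫ t in (-L)..L, fin t := by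
      rw [hgindef, integral_indicator measurableSet_Icc, integral_Icc_eq_integral_Ioc,
        intervalIntegral.integral_of_le hLL]
    rw [h0, hsplit]
    have hb1 : (2*L)*(1 + 4*Real.sqrt (1+X+L))
        + 2*((∫ t in (-L)..L, (c-t)^(-(1/2):ℝ)) + (∫ t in (-L)..L, (t-c)^(-(1/2):ℝ)))
        ≤ (10*L+8) * Real.sqrt (1+X+L) := by
      nlinarith [hI1, hI2, hsqB]
    have hb2 : A * ((10*L+8) * Real.sqrt (1+X+L))
        ≤ K*S*E*C₁*P := by
      have hstep : A * ((10*L+8) * Real.sqrt (1+X+L))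
          ≤ A * ((10*L+8) * (Real.sqrt (1+L) * Real.sqrt (1+X))) := by
        apply mul_le_mul_of_nonneg_left _ hA
        apply mul_le_mul_of_nonneg_left hsqfac (by linarith)
      refine le_trans hstep ?_
      have hkey : (1+X)^(-(3/2):ℝ) * Real.sqrt (1+X) ≤ P := by
        rw [Real.sqrt_eq_rpow, ← Real.rpow_add h1X0, hPdef]
        exact Real.rpow_le_rpow_of_exponent_le h1X (by linarith)
      have hfac : (0:ℝ) ≤ K*S*E*((10*L+8) * Real.sqrt (1+L)) := by positivity
      calc A * ((10*L+8) * (Real.sqrt (1+L) * Real.sqrt (1+X)))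
          = (K*S*E*((10*L+8) * Real.sqrt (1+L))) * ((1+X)^(-(3/2):ℝ) * Real.sqrt (1+X)) := by
            rw [hAdef]; try ring
        _ ≤ (K*S*E*((10*L+8) * Real.sqrt (1+L))) * P := by
            exact mul_le_mul_of_nonneg_left hkey hfac
        _ = K*S*E*C₁*P := by rw [hC₁def]; try ring
    refine le_trans (mul_le_mul_of_nonneg_left hb1 hA) hb2
  -- gout integral bound
  have hfront : ∫ t in Ioc 0 (1+X), f₀ t ≤ (2/(1-α)) * P := by
    have hmono : ∫ t in Ioc 0 (1+X), f₀ t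
        ≤ ∫ t in Ioc 0 (1+X), (1+X)^(-(3/2):ℝ) * (1+t)^(-α) := by
      apply setIntegral_mono_on hf0Ioc _ measurableSet_Ioc
      · intro t ht
        rw [hf₀def]
        apply mul_le_mul_of_nonneg_right _ (Real.rpow_nonneg (by nlinarith [ht.1]) _)
        exact Real.rpow_le_rpow_of_nonpos h1X0 (by nlinarith [ht.1]) (by norm_num)
      · apply Integrable.const_mul
        refine (intervalIntegrable_iff_integrableOn_Ioc_of_le (by linarith)).mp ?_
        have h := (intervalIntegral.intervalIntegrable_rpow'
          (by linarith : (-1:ℝ) < -α) (a := (1:ℝ)) (b := 2+X)).comp_add_left 1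
        have e1 : (1:ℝ) - 1 = 0 := by ring
        have e2 : (2+X) - 1 = 1+X := by ring
        rw [e1, e2] at h
        exact h
    refine le_trans hmono ?_
    rw [← intervalIntegral.integral_of_le (by linarith : (0:ℝ) ≤ 1+X),
      intervalIntegral.integral_const_mul,
      intervalIntegral.integral_comp_add_left (fun s => s ^ (-α)) 1]
    have e2 : (1:ℝ) + (1+X) = 2+X := by ring
    rw [e2, integral_rpow (Or.inl (by linarith))]
    rw [show ((1:ℝ)+0) = 1 from by norm_num, Real.one_rpow]
    have hR0 : (0:ℝ) ≤ (1+X)^(-(3/2):ℝ) := Real.rpow_nonneg (by linarith) _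
    have hV0 : (0:ℝ) ≤ (1+X)^(-α+1) := Real.rpow_nonneg (by linarith) _
    have hq1 : (2+X)^(-α+1) ≤ 2*(1+X)^(-α+1) := by
      have h1 : (2+X : ℝ) ≤ 2*(1+X) := by linarith
      have h2 : ((2:ℝ)*(1+X))^(-α+1) = 2^(-α+1) * (1+X)^(-α+1) :=
        Real.mul_rpow (by norm_num) (by linarith)
      have h3 : (2+X)^(-α+1) ≤ ((2:ℝ)*(1+X))^(-α+1) :=
        Real.rpow_le_rpow (by linarith) h1 (by linarith)
      have h4 : (2:ℝ)^(-α+1) ≤ 2 := by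
        calc (2:ℝ)^(-α+1) ≤ (2:ℝ)^(1:ℝ) :=
              Real.rpow_le_rpow_of_exponent_le one_le_two (by linarith)
          _ = 2 := Real.rpow_one 2
      nlinarith
    have hkey2 : (1+X)^(-(3/2):ℝ) * (1+X)^(-α+1) = P := by
      rw [← Real.rpow_add h1X0, hPdef]
      congr 1
      ring
    have h5 : (1+X)^(-(3/2):ℝ) * (((2+X)^(-α+1) - 1)/(-α+1))
        = ((1+X)^(-(3/2):ℝ) * ((2+X)^(-α+1) - 1))/(1-α) := by
      rw [show ((-α+1):ℝ) = 1-α from by ring]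
      ring
    rw [h5, div_le_iff₀ hα1]
    have h6 : (2/(1-α)) * P * (1-α) = 2*P := by field_simp
    rw [h6]
    nlinarith [mul_le_mul_of_nonneg_left hq1 hR0]
  have htail : ∫ t in Ioi (1+X), f₀ t ≤ 2 * P := by
    have h1 : ∫ t in Ioi (1+X), f₀ t ≤ ∫ t in Ioi (1+X), t ^ (-(3/2)-α:ℝ) :=
      setIntegral_mono_on hf0Ioi hpow measurableSet_Ioi hptwise
    rw [integral_Ioi_rpow_of_lt (by linarith) (by linarith)] at h1
    rw [show ((-(3/2):ℝ)-α)+1 = -(α+1/2) from by ring] at h1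
    have h2 : -(1+X)^(-(α+1/2):ℝ)/(-(α+1/2)) = P/(α+1/2) := by
      rw [hPdef]; exact neg_div_neg_eq _ _
    rw [h2] at h1
    refine le_trans h1 ?_
    rw [div_le_iff₀ (by linarith : (0:ℝ) < α+1/2)]
    have h4 : 0 ≤ P * α := mul_nonneg hP0 hα0.le
    linarith
  have hIgout : ∫ t, gout t ≤ K*S*E*C₂*P := by
    have h0 : ∫ t, gout t = (K*S*E) * ∫ t : ℝ, f₀ |t| := by
      rw [hgoutdef]
      exact integral_const_mul _ _
    have h1 : ∫ t : ℝ, f₀ |t| = 2 * ∫ t in Ioi (0:ℝ), f₀ t := integral_comp_abs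
    have h2 : ∫ t in Ioi (0:ℝ), f₀ t
        = (∫ t in Ioc 0 (1+X), f₀ t) + ∫ t in Ioi (1+X), f₀ t := by
      rw [← setIntegral_union (Ioc_disjoint_Ioi le_rfl) measurableSet_Ioi hf0Ioc hf0Ioi,
        Ioc_union_Ioi_eq_Ioi (by linarith : (0:ℝ) ≤ 1+X)]
    rw [h0, h1, h2]
    calc (K*S*E) * (2 * ((∫ t in Ioc 0 (1+X), f₀ t) + ∫ t in Ioi (1+X), f₀ t))
        ≤ (K*S*E) * (2 * ((2/(1-α))*P + 2*P)) := by
          apply mul_le_mul_of_nonneg_left _ (by positivity)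
          apply mul_le_mul_of_nonneg_left _ (by norm_num)
          exact add_le_add hfront htail
      _ = K*S*E*C₂*P := by rw [hC₂def]; ring
  -- a.e. pointwise bound
  have hgout0 : ∀ s : ℝ, 0 ≤ gout s := by
    intro s
    have h : (0:ℝ) ≤ K*S*E * ((1+X+|s|)^(-(3/2):ℝ) * (1+|s|)^(-α)) :=
      mul_nonneg (by positivity)
        (mul_nonneg (Real.rpow_nonneg (by linarith [abs_nonneg s]) _)
          (Real.rpow_nonneg (by linarith [abs_nonneg s]) _))
    exact h
  have hasm : AEStronglyMeasurable (fun t => κ x t * σ t) volume :=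
    ((hκm x).mul hσm).aestronglyMeasurable
  have hne : ∀ᵐ t : ℝ, t ≠ c := by
    have h : {t : ℝ | ¬ t ≠ c} = {c} := by ext y; simp
    rw [ae_iff, h]
    exact measure_singleton c
  have hae : ∀ᵐ t : ℝ, ‖κ x t * σ t‖ ≤ gin t + gout t := by
    filter_upwards [hne] with t ht
    rw [norm_mul]
    by_cases hcase : |t| ≤ L
    · have htx : (t:ℂ) ≠ x := fun h => ht (by rw [hcdef, ← h, Complex.ofReal_re])
      have h1 := hinx t hcase htx
      have h2 := hσb t
      have hu : 0 < |c - t| := abs_pos.mpr (sub_ne_zero.mpr (Ne.symm ht))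
      have hur : |c - t| ≤ ‖x - t‖ := by
        have h3 := Complex.abs_re_le_norm (x - t)
        simpa [Complex.sub_re, Complex.ofReal_re] using h3
      have hrB : ‖x - t‖ ≤ 1+X+L := by
        have h4 : ‖x - t‖ ≤ ‖x‖ + ‖(t:ℂ)‖ := by
          simpa using norm_sub_le x (t:ℂ)
        rw [Complex.norm_real, Real.norm_eq_abs] at h4
        have h5 : |t| ≤ L := hcase
        rw [← hXdef] at h4
        linarith
      have hkey := one_add_abs_log_le hu hur hrB hB1
      rw [abs_rpow_neg_half, neg_sub] at hkey
      have hmem : t ∈ Icc (-L) L := by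
        obtain ⟨hm1, hm2⟩ := abs_le.mp hcase
        exact ⟨hm1, hm2⟩
      have hginval : gin t = fin t := by
        rw [hgindef]
        exact indicator_of_mem hmem fin
      have hrpow1 : (1 + |t|)^(-α) ≤ 1 :=
        Real.rpow_le_one_of_one_le_of_nonpos (by linarith [abs_nonneg t]) (by linarith)
      have hb0 : 0 ≤ K * (1 + |Real.log (‖x - (t:ℂ)‖)|) * E * (1+X)^(-(3/2):ℝ) := by
        have := abs_nonneg (Real.log (‖x - (t:ℂ)‖))
        positivity
      calc ‖κ x t‖ * ‖σ t‖
          ≤ (K * (1 + |Real.log (‖x - (t:ℂ)‖)|) * E * (1+X)^(-(3/2):ℝ))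
            * (S * (1 + |t|)^(-α)) :=
            mul_le_mul h1 h2 (norm_nonneg _) hb0
        _ ≤ (K * (1 + |Real.log (‖x - (t:ℂ)‖)|) * E * (1+X)^(-(3/2):ℝ))
            * (S * 1) := by
            apply mul_le_mul_of_nonneg_left _ hb0
            exact mul_le_mul_of_nonneg_left hrpow1 hS
        _ ≤ fin t := by
            have h7 : (K * (1 + |Real.log (‖x - (t:ℂ)‖)|) * E * (1+X)^(-(3/2):ℝ))
                * (S * 1)
                = (K*S*E*(1+X)^(-(3/2):ℝ)) * (1 + |Real.log (‖x - (t:ℂ)‖)|) := by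
              ring
            rw [h7]
            have h6 := mul_le_mul_of_nonneg_left hkey
              (show (0:ℝ) ≤ K*S*E*(1+X)^(-(3/2):ℝ) by positivity)
            exact h6
        _ = gin t := hginval.symm
        _ ≤ gin t + gout t := le_add_of_nonneg_right (hgout0 t)
    · push_neg at hcase
      have h1 := houtx t hcase
      have h2 := hσb t
      have hnotmem : t ∉ Icc (-L) L := by
        intro hmem
        exact absurd (abs_le.mpr ⟨hmem.1, hmem.2⟩) (not_le.mpr hcase)
      have hginval : gin t = 0 := by
        rw [hgindef]
        exact indicator_of_notMem hnotmem fin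
      have hb0 : 0 ≤ K * E * (1+X+|t|)^(-(3/2):ℝ) :=
        mul_nonneg (mul_nonneg hK hE.le) (Real.rpow_nonneg (by linarith [abs_nonneg t]) _)
      calc ‖κ x t‖ * ‖σ t‖
          ≤ (K * E * (1+X+|t|)^(-(3/2):ℝ)) * (S * (1 + |t|)^(-α)) :=
            mul_le_mul h1 h2 (norm_nonneg _) hb0
        _ = K*S*E * ((1+X+|t|)^(-(3/2):ℝ) * (1+|t|)^(-α)) := by ring
        _ = gout t := rfl
        _ = gin t + gout t := by rw [hginval, zero_add]
  have hint : Integrable (fun t => κ x t * σ t) volume :=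
    (hgin.add hgout).mono' hasm hae
  refine ⟨hint, ?_⟩
  calc ‖∫ t, κ x t * σ t‖ = ‖∫ t, κ x t * σ t‖ := rfl
    _ ≤ ∫ t, ‖κ x t * σ t‖ := norm_integral_le_integral_norm _
    _ ≤ ∫ t, (gin t + gout t) := integral_mono_ae hint.norm (hgin.add hgout) hae
    _ = (∫ t, gin t) + ∫ t, gout t := integral_add hgin hgout
    _ ≤ K*S*E*C₁*P + K*S*E*C₂*P := add_le_add hIgin hIgout
    _ ≤ (K * (C₁ + C₂) + 1) * S * E * P := by
        nlinarith [mul_nonneg (mul_nonneg hS hE.le) hP0]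


end
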